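/- The free monogenic semigroup T = {x, x², x³, ...} is not co-hopfian: the map x^m ↦ x^{2m} is an injective non-surjective endomorphism. But the semigroup S presented by ⟨x, y | y² = xy = yx = x²⟩ equals T ∪ {y}, and every injective endomorphism of S is bijective (S is co-hopfian). -/

import Mathlib

/-- The semigroup `S = ⟨x, y | y² = xy = yx = x²⟩`, which equals `T ∪ {y}` where
`T = {x, x², x³, ...}` is the free monogenic semigroup: elements are the powers
`x^n` (`pow n`) together with `y`. -/
inductive Sfm
  | pow : ℕ+ → Sfm
  | y : Sfm

/-- The weight of an element: `x^n` has weight `n` and `y` has weight `1`;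
the product of any two elements is `x` to the sum of their weights. -/
def Sfm.wt : Sfm → ℕ+
  | .pow n => n
  | .y => 1

instance : Mul Sfm := ⟨fun a b => Sfm.pow (a.wt + b.wt)⟩

instance : Semigroup Sfm where
  mul_assoc a b c := by
    show Sfm.pow ((Sfm.pow (a.wt + b.wt)).wt + c.wt)
        = Sfm.pow (a.wt + (Sfm.pow (b.wt + c.wt)).wt)
    simp [Sfm.wt, add_assoc]

/-- The free monogenic semigroup `T = {x, x², ...}` is not co-hopfian
(`x^m ↦ x^{2m}` is an injective non-surjective endomorphism), but the semigroup
`S = ⟨x, y | y² = xy = yx = x²⟩ = T ∪ {y}` is co-hopfian: every injective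
endomorphism of `S` is bijective. -/
theorem stmt11 :
    ((∀ m n : ℕ+, Sfm.pow m * Sfm.pow n = Sfm.pow (m + n)) ∧
      Function.Injective Sfm.pow ∧
      (Set.univ : Set Sfm) = Set.range Sfm.pow ∪ {Sfm.y}) ∧
    (∃ f : ℕ+ → ℕ+, (∀ m n : ℕ+, f (m + n) = f m + f n) ∧
      Function.Injective f ∧ ¬ Function.Surjective f) ∧
    (∀ φ : Sfm → Sfm, Function.Injective φ →
      (∀ a b : Sfm, φ (a * b) = φ a * φ b) → Function.Bijective φ) := by
  refine ⟨⟨fun m n => rfl, fun a b h => by injection h, ?_⟩, ?_, ?_⟩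
  · ext s
    cases s with
    | pow n => simp
    | y => simp
  · refine ⟨fun n => n + n, fun m n => by ring, ?_, ?_⟩
    · intro a b h
      apply PNat.coe_injective
      have h' : ((a + a : ℕ+) : ℕ) = ((b + b : ℕ+) : ℕ) := congrArg (fun x : ℕ+ => (x : ℕ)) h
      push_cast at h'
      omega
    · intro hs
      obtain ⟨n, hn⟩ := hs 1
      have h' : ((n + n : ℕ+) : ℕ) = ((1 : ℕ+) : ℕ) := congrArg (fun x : ℕ+ => (x : ℕ)) hn
      have := n.pos
      push_cast at h'
      omega
  · intro φ hinj hmul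
    set g : ℕ+ → ℕ+ := fun n => (φ (Sfm.pow n)).wt with hg
    have L1 : ∀ m n : ℕ+, φ (Sfm.pow (m + n)) = Sfm.pow (g m + g n) :=
      fun m n => hmul (Sfm.pow m) (Sfm.pow n)
    have gadd : ∀ m n : ℕ+, g (m + n) = g m + g n := by
      intro m n
      have h := congrArg Sfm.wt (L1 m n)
      simpa [hg, Sfm.wt] using h
    -- weight of φ y equals g 1
    have hy : φ (Sfm.pow (1 + 1)) = Sfm.pow ((φ Sfm.y).wt + (φ Sfm.y).wt) :=
      hmul Sfm.y Sfm.y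
    have hy2 : φ (Sfm.pow (1 + 1)) = Sfm.pow (g 1 + g 1) := L1 1 1
    have hwy : (φ Sfm.y).wt = g 1 := by
      have h := hy.symm.trans hy2
      have h2 : (φ Sfm.y).wt + (φ Sfm.y).wt = g 1 + g 1 := by
        injection h
      apply PNat.coe_injective
      have h3 : (((φ Sfm.y).wt + (φ Sfm.y).wt : ℕ+) : ℕ) = ((g 1 + g 1 : ℕ+) : ℕ) := by
        exact congrArg (fun x : ℕ+ => (x : ℕ)) h2
      push_cast at h3
      omega
    have key : ∀ n : ℕ+, g 1 = 1 → φ (Sfm.pow (n + 1)) = Sfm.pow (n + 1) := by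
      intro n h1
      have glin : ∀ k : ℕ+, g k = k := by
        intro k
        induction k using PNat.recOn with
        | one => exact h1
        | succ m ih => rw [gadd, ih, h1]
      rw [L1 n 1, glin, h1]
    refine ⟨hinj, ?_⟩
    cases hφy : φ Sfm.y with
    | y =>
      -- g 1 = 1 since (φ y).wt = 1
      have h1 : g 1 = 1 := by rw [← hwy, hφy]; rfl
      cases hφ1 : φ (Sfm.pow 1) with
      | y => exact absurd (hinj (hφ1.trans hφy.symm)) (by simp)
      | pow j =>
        have hj : j = 1 := by
          have : g 1 = j := by rw [hg]; simp [hφ1, Sfm.wt]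
          rw [h1] at this; exact this.symm
        subst hj
        intro t
        cases t with
        | y => exact ⟨Sfm.y, hφy⟩
        | pow n =>
          induction n using PNat.recOn with
          | one => exact ⟨Sfm.pow 1, hφ1⟩
          | succ m _ => exact ⟨Sfm.pow (m + 1), key m h1⟩
    | pow k =>
      have hk : k = g 1 := by rw [← hwy, hφy]; rfl
      cases hφ1 : φ (Sfm.pow 1) with
      | pow j =>
        have hj : j = g 1 := by rw [hg]; simp [hφ1, Sfm.wt]
        exact absurd (hinj (hφ1.trans (by rw [hj, ← hk, ← hφy]))) (by simp)
      | y =>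
        have h1 : g 1 = 1 := by rw [hg]; simp [hφ1, Sfm.wt]
        have hk1 : k = 1 := hk.trans h1
        subst hk1
        intro t
        cases t with
        | y => exact ⟨Sfm.pow 1, hφ1⟩
        | pow n =>
          induction n using PNat.recOn with
          | one => exact ⟨Sfm.y, hφy⟩
          | succ m _ => exact ⟨Sfm.pow (m + 1), key m h1⟩
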